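/- Let p be a prime, k ≥ 1 an integer, a_0, a_1, …, a_k ∈ F_p^*, and let 1 ≤ t_1 < … < t_k < p be integers. Suppose the polynomial F(X) = a_0 + a_1·X^{t_1} + … + a_k·X^{t_k} ∈ F_p[X] splits completely over F_p (i.e., is a product of linear factors in F_p[X]). Then the number of distinct x ∈ F_p^* with F(x) = 0 is at least t_k / k. -/

import Mathlib

open Polynomial

/-- Applying the operator `f ↦ X * f'` iteratively `j` times to the lacunary sum
multiplies each coefficient by `t i ^ j`. -/
private lemma theta_iterate_sum {R : Type*} [CommRing R] {k : ℕ}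
    (a : Fin (k + 1) → R) (t : Fin (k + 1) → ℕ) (j : ℕ) :
    (fun f : R[X] => X * derivative f)^[j] (∑ i : Fin (k + 1), C (a i) * X ^ t i)
      = ∑ i : Fin (k + 1), C (a i * (t i : R) ^ j) * X ^ t i := by
  induction j with
  | zero => simp
  | succ j ih =>
    rw [Function.iterate_succ_apply', ih]
    simp only [derivative_sum, Finset.mul_sum]
    refine Finset.sum_congr rfl fun i _ => ?_
    rw [derivative_C_mul_X_pow]
    rcases Nat.eq_zero_or_pos (t i) with h | h
    · simp [h]
    · rw [mul_left_comm, ← pow_succ', Nat.sub_add_cancel h, pow_succ, mul_assoc]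

/-- Iterating `f ↦ X * f'` reduces the power of `(X - C x)` dividing by at most one each time. -/
private lemma pow_sub_dvd_theta_iterate {R : Type*} [CommRing R] {x : R} {F : R[X]} {m : ℕ}
    (h : (X - C x) ^ m ∣ F) (j : ℕ) :
    (X - C x) ^ (m - j) ∣ (fun f : R[X] => X * derivative f)^[j] F := by
  induction j with
  | zero => simpa using h
  | succ j ih =>
    rw [Function.iterate_succ_apply']
    have := pow_sub_one_dvd_derivative_of_pow_dvd ih
    rw [Nat.sub_sub] at this
    exact this.mul_left X

/-- Key lemma: every root of the lacunary polynomial has multiplicity at most `k`. -/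
private lemma rootMultiplicity_le {p : ℕ} [Fact p.Prime] {k : ℕ}
    (a : Fin (k + 1) → ZMod p) (ha : ∀ i, a i ≠ 0)
    (t : Fin (k + 1) → ℕ) (ht0 : t 0 = 0) (htmono : StrictMono t)
    (htp : t (Fin.last k) < p) (x : ZMod p) :
    rootMultiplicity x (∑ i : Fin (k + 1), C (a i) * X ^ t i) ≤ k := by
  set F : (ZMod p)[X] := ∑ i : Fin (k + 1), C (a i) * X ^ t i with hF
  by_contra hcon
  push_neg at hcon
  have hdvd : (X - C x) ^ (k + 1) ∣ F :=
    dvd_trans (pow_dvd_pow _ hcon) (pow_rootMultiplicity_dvd F x)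
  -- evaluate the iterated operator at x
  have heval : ∀ j : Fin (k + 1),
      ∑ i : Fin (k + 1), (a i * x ^ t i) * ((t i : ZMod p)) ^ (j : ℕ) = 0 := by
    intro j
    have hj : (j : ℕ) ≤ k := Nat.lt_succ_iff.mp j.isLt
    have hdvd2 := pow_sub_dvd_theta_iterate hdvd (j : ℕ)
    have hpos : 1 ≤ k + 1 - (j : ℕ) := by omega
    have hdvd3 : (X - C x) ∣ (fun f : (ZMod p)[X] => X * derivative f)^[(j : ℕ)] F :=
      dvd_trans (dvd_pow_self (X - C x) (by omega)) hdvd2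
    have : eval x ((fun f : (ZMod p)[X] => X * derivative f)^[(j : ℕ)] F) = 0 :=
      eval_eq_zero_of_dvd_of_eval_eq_zero hdvd3 (by simp)
    rw [hF, theta_iterate_sum] at this
    simp only [eval_finset_sum, eval_mul, eval_C, eval_pow, eval_X] at this
    rw [← this]
    exact Finset.sum_congr rfl fun i _ => by ring
  -- Vandermonde argument
  have htinj : Function.Injective fun i : Fin (k + 1) => ((t i : ZMod p)) := by
    intro i i' h
    have h' : ((t i : ZMod p)) = ((t i' : ZMod p)) := h
    have hi : t i < p := lt_of_le_of_lt (htmono.monotone (Fin.le_last i)) htp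
    have hi' : t i' < p := lt_of_le_of_lt (htmono.monotone (Fin.le_last i')) htp
    have : (t i : ZMod p).val = (t i' : ZMod p).val := by rw [h']
    rw [ZMod.val_cast_of_lt hi, ZMod.val_cast_of_lt hi'] at this
    exact htmono.injective this
  have hv0 : (fun i : Fin (k + 1) => a i * x ^ t i) = 0 :=
    Matrix.eq_zero_of_forall_pow_sum_mul_pow_eq_zero htinj heval
  have : a 0 * x ^ t 0 = 0 := congrFun hv0 0
  rw [ht0, pow_zero, mul_one] at this
  exact ha 0 this

theorem card_roots_of_splits_lacunary
    (p : ℕ) [Fact p.Prime] (k : ℕ) (hk : 1 ≤ k)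
    (a : Fin (k + 1) → ZMod p) (ha : ∀ i, a i ≠ 0)
    (t : Fin (k + 1) → ℕ) (ht0 : t 0 = 0) (htmono : StrictMono t)
    (htp : t (Fin.last k) < p)
    (hsplit : Splits ((∑ i : Fin (k + 1), C (a i) * X ^ t i).map (RingHom.id (ZMod p)))) :
    (t (Fin.last k) : ℝ) / k ≤
      Set.ncard {x : ZMod p | x ≠ 0 ∧
        (∑ i : Fin (k + 1), C (a i) * X ^ t i).eval x = 0} := by
  classical
  set F : (ZMod p)[X] := ∑ i : Fin (k + 1), C (a i) * X ^ t i with hF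
  -- the top coefficient
  have hcoeff : F.coeff (t (Fin.last k)) = a (Fin.last k) := by
    rw [hF, finset_sum_coeff]
    rw [Finset.sum_eq_single (Fin.last k)]
    · simp
    · intro i _ hne
      rw [coeff_C_mul, coeff_X_pow, if_neg (fun h => hne (htmono.injective h.symm)), mul_zero]
    · simp
  have hF0 : F ≠ 0 := fun h => ha (Fin.last k) (by rw [← hcoeff, h, coeff_zero])
  -- natDegree F = t (last)
  have hdegle : F.natDegree ≤ t (Fin.last k) := by
    rw [hF]
    refine Polynomial.natDegree_sum_le_of_forall_le _ _ fun i _ => ?_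
    exact le_trans (natDegree_C_mul_le _ _) (by
      simpa using htmono.monotone (Fin.le_last i))
  have hdeg : F.natDegree = t (Fin.last k) :=
    le_antisymm hdegle (le_natDegree_of_ne_zero (by rw [hcoeff]; exact ha _))
  -- number of roots with multiplicity
  have hcard : F.roots.card = t (Fin.last k) := by
    rw [splits_iff_card_roots.mp (by simpa only [map_id] using hsplit), hdeg]
  -- each multiplicity ≤ k
  have hmult : ∀ x ∈ F.roots.toFinset, F.roots.count x ≤ k := by
    intro x _
    rw [count_roots]
    exact rootMultiplicity_le a ha t ht0 htmono htp x
  have hcount : t (Fin.last k) ≤ F.roots.toFinset.card * k := by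
    calc t (Fin.last k) = F.roots.card := hcard.symm
    _ = ∑ x ∈ F.roots.toFinset, F.roots.count x := (Multiset.toFinset_sum_count_eq _).symm
    _ ≤ ∑ _x ∈ F.roots.toFinset, k := Finset.sum_le_sum hmult
    _ = F.roots.toFinset.card * k := by rw [Finset.sum_const, smul_eq_mul]
  -- the set is precisely the root set
  have hset : {x : ZMod p | x ≠ 0 ∧ F.eval x = 0} = ↑F.roots.toFinset := by
    ext x
    simp only [Set.mem_setOf_eq, Finset.coe_sort_coe, Multiset.mem_toFinset, Finset.mem_coe,
      mem_roots', hF0, ne_eq, not_false_eq_true, true_and, IsRoot.def]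
    constructor
    · exact fun h => h.2
    · intro h
      refine ⟨fun hx0 => ?_, h⟩
      rw [hx0, hF] at h
      simp only [eval_finset_sum, eval_mul, eval_C, eval_pow, eval_X] at h
      rw [Finset.sum_eq_single 0] at h
      · rw [ht0, pow_zero, mul_one] at h
        exact ha 0 h
      · intro i _ hne
        have : 0 < t i := by
          rw [← ht0]
          exact htmono (Fin.pos_of_ne_zero hne)
        rw [zero_pow this.ne', mul_zero]
      · simp
  rw [hset, Set.ncard_coe_finset]
  rw [div_le_iff₀ (by exact_mod_cast hk)]
  exact_mod_cast hcount
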